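/- Let r ≥ 1 and let Q be a real-rooted and squarefree real polynomial of degree 2r with negative leading coefficient (so {x | Q(x) ≥ 0} is the union of exactly r pairwise disjoint bounded closed intervals). Then S_Q, with the topology induced from ℝ³, is homeomorphic to Fin r × S², the disjoint union of r copies of the unit 2-sphere S² ⊂ ℝ³ (Fin r carrying the discrete topology). In particular S_Q has exactly r connected components, each homeomorphic to a 2-sphere. -/

import Mathlib

/-- The affine surface `y² + z² = Q(x)` in `ℝ³`. -/
def SQ (Q : Polynomial ℝ) : Set (ℝ × ℝ × ℝ) :=
  {v | v.2.1 ^ 2 + v.2.2 ^ 2 = Q.eval v.1}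

/-- A real polynomial which is nonconstant, has all of its complex roots real,
and has no repeated roots. -/
def RealRootedSquarefree (P : Polynomial ℝ) : Prop :=
  0 < P.natDegree ∧ Squarefree P ∧ ∀ z : ℂ, Polynomial.aeval z P = 0 → z.im = 0

open Polynomial Finset in
private lemma SQaux_enum (Q : ℝ[X]) (r : ℕ) (hsf : Squarefree Q) (hdeg : Q.natDegree = 2*r)
    (him : ∀ z : ℂ, Polynomial.aeval z Q = 0 → z.im = 0) :
    ∃ x : Fin (2*r) → ℝ, StrictMono x ∧
      (∀ t, Q.eval t = Q.leadingCoeff * ∏ i, (t - x i)) := by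
  classical
  have hQ0 : Q ≠ 0 := hsf.ne_zero
  have hsep : Q.Separable := PerfectField.separable_iff_squarefree.mpr hsf
  have hnd : Q.roots.Nodup := nodup_roots hsep
  have hC0 : Q.map (algebraMap ℝ ℂ) ≠ 0 :=
    (Polynomial.map_ne_zero hQ0 : Q.map (algebraMap ℝ ℂ) ≠ 0)
  have hndC : (Q.map (algebraMap ℝ ℂ)).roots.Nodup := nodup_roots hsep.map
  have hcardC : (Q.map (algebraMap ℝ ℂ)).roots.card = 2*r := by
    have := (IsAlgClosed.splits (Q.map (algebraMap ℝ ℂ))).natDegree_eq_card_roots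
    rw [Polynomial.natDegree_map, hdeg] at this
    exact this.symm
  have key : ∀ z ∈ (Q.map (algebraMap ℝ ℂ)).roots, z.re ∈ Q.roots ∧ z = (z.re : ℂ) := by
    intro z hz
    have hz0 : Polynomial.aeval z Q = 0 := by
      have h2 := (Polynomial.mem_roots hC0).mp hz
      rwa [Polynomial.IsRoot.def, Polynomial.eval_map, ← Polynomial.aeval_def] at h2
    have hzim := him z hz0
    have hzre : z = (z.re : ℂ) := by
      apply Complex.ext <;> simp [hzim]
    refine ⟨(Polynomial.mem_roots hQ0).mpr ?_, hzre⟩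
    have h3 : (algebraMap ℝ ℂ) (Q.eval z.re) = 0 := by
      have h4 := hz0
      rw [hzre, Polynomial.aeval_def, show ((z.re:ℝ):ℂ) = algebraMap ℝ ℂ z.re from rfl,
        Polynomial.eval₂_at_apply] at h4
      exact h4
    exact (_root_.map_eq_zero _).mp h3
  have hinj : Set.InjOn Complex.re ((Q.map (algebraMap ℝ ℂ)).roots.toFinset : Set ℂ) := by
    intro z hz w hw h
    simp only [Finset.coe_sort_coe, Finset.mem_coe, Multiset.mem_toFinset] at hz hw
    rw [(key z hz).2, (key w hw).2, h]
  have hle : 2*r ≤ Q.roots.toFinset.card := by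
    have := Finset.card_le_card_of_injOn (t := Q.roots.toFinset) Complex.re (fun z hz => by
      rw [Finset.mem_coe, Multiset.mem_toFinset] at hz ⊢
      exact (key z hz).1) hinj
    rwa [Multiset.toFinset_card_of_nodup hndC, hcardC] at this
  have hge : Q.roots.card ≤ 2*r := by
    rw [← hdeg]; exact Q.card_roots'
  have hcard : Q.roots.card = 2*r := by
    have := Multiset.toFinset_card_le Q.roots
    omega
  have hs : Q.Splits :=
    (Polynomial.splits_iff_card_roots).mpr (by rw [hcard, hdeg])
  -- enumeration
  set L := Q.roots.sort (· ≤ ·) with hL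
  have hLe : (L : Multiset ℝ) = Q.roots := Q.roots.sort_eq _
  have hlen : L.length = 2*r := by
    have : (L : Multiset ℝ).card = Q.roots.card := by rw [hLe]
    simpa [hcard] using this
  have hnodL : L.Nodup := by
    have := hnd; rwa [← hLe, Multiset.coe_nodup] at this
  have hsorted : L.Pairwise (· ≤ ·) := Multiset.pairwise_sort (s := Q.roots) (r := (· ≤ ·))
  have hslt : L.Pairwise (· < ·) := by
    exact (hsorted.and hnodL).imp (fun h => lt_of_le_of_ne h.1 h.2)
  refine ⟨fun i => L.get (Fin.cast hlen.symm i), ?_, ?_⟩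
  · intro i j hij
    apply (List.sortedLT_iff_pairwise.mpr hslt).strictMono_get
    simp only [Fin.lt_def, Fin.coe_cast]
    exact hij
  · intro t
    have hfact := hs.eq_prod_roots
    conv_lhs => rw [hfact]
    rw [Polynomial.eval_mul, Polynomial.eval_C, Polynomial.eval_multiset_prod]
    congr 1
    rw [← hLe]
    rw [show ((L : Multiset ℝ).map fun a => X - C a).map (eval t)
        = ((L.map fun a => t - a : List ℝ) : Multiset ℝ) by
      simp [Multiset.map_coe, Function.comp_def]]
    rw [Multiset.prod_coe]
    rw [← List.ofFn_getElem_eq_map L (fun a => t - a), List.prod_ofFn]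
    exact Fintype.prod_equiv (finCongr hlen) _ _ (fun i => rfl)

open Polynomial Finset in
private lemma SQaux_sign (Q : ℝ[X]) (r : ℕ) (x : Fin (2*r) → ℝ) (hmono : StrictMono x)
    (heval : ∀ t, Q.eval t = Q.leadingCoeff * ∏ i, (t - x i))
    (hlead : Q.leadingCoeff < 0) :
    (∀ t, 0 ≤ Q.eval t → ∃ k : Fin r,
        x ⟨2*k, by omega⟩ ≤ t ∧ t ≤ x ⟨2*k+1, by omega⟩) ∧
    (∀ k : Fin r, ∀ t, x ⟨2*k, by omega⟩ < t → t < x ⟨2*k+1, by omega⟩ → 0 < Q.eval t) := by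
  classical
  have sign : ∀ t, (∀ i, t ≠ x i) →
      ∃ P : ℝ, 0 < P ∧ Q.eval t
        = Q.leadingCoeff * ((-1)^(univ.filter (fun i => t < x i)).card * P) := by
    intro t ht
    set S := univ.filter (fun i => t < x i) with hS
    have h1 : ∏ i ∈ S, (t - x i) = (-1)^S.card * ∏ i ∈ S, (x i - t) := by
      rw [← prod_const, ← prod_mul_distrib]
      exact Finset.prod_congr rfl (fun i _ => by ring)
    have h2 : 0 < ∏ i ∈ S, (x i - t) := by
      apply Finset.prod_pos
      intro i hi
      have := (Finset.mem_filter.mp hi).2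
      linarith
    have h3 : 0 < ∏ i ∈ Sᶜ, (t - x i) := by
      apply Finset.prod_pos
      intro i hi
      have hni := Finset.mem_compl.mp hi
      have : ¬ t < x i := fun h => hni (Finset.mem_filter.mpr ⟨Finset.mem_univ _, h⟩)
      have := lt_of_le_of_ne (not_lt.mp this) (fun h => ht i h.symm)
      linarith
    refine ⟨(∏ i ∈ S, (x i - t)) * ∏ i ∈ Sᶜ, (t - x i), mul_pos h2 h3, ?_⟩
    rw [heval t, ← Finset.prod_mul_prod_compl S, h1]
    ring
  constructor
  · intro t h0
    by_cases hroot : ∃ i, t = x i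
    · obtain ⟨i, hi⟩ := hroot
      rcases Nat.even_or_odd i.val with ⟨k, hk⟩ | ⟨k, hk⟩
      · refine ⟨⟨k, by omega⟩, ?_, ?_⟩
        · exact le_of_eq (by rw [hi]; congr 1; exact Fin.ext (by simp only [Fin.val_mk]; omega))
        · rw [hi]
          exact le_of_lt (hmono (by simp only [Fin.lt_def, Fin.val_mk]; omega))
      · refine ⟨⟨k, by omega⟩, ?_, ?_⟩
        · rw [hi]
          exact le_of_lt (hmono (by simp only [Fin.lt_def, Fin.val_mk]; omega))
        · exact le_of_eq (by rw [hi]; congr 1; exact Fin.ext (by simp only [Fin.val_mk]; omega))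
    · push_neg at hroot
      obtain ⟨P, hP, hQt⟩ := sign t hroot
      set S := univ.filter (fun i => t < x i) with hS
      have hodd : Odd S.card := by
        rcases Nat.even_or_odd S.card with he | ho
        · exfalso
          rw [he.neg_one_pow, one_mul] at hQt
          nlinarith
        · exact ho
      have hne : S.Nonempty := by
        rw [← Finset.card_pos]
        rcases hodd with ⟨m, hm⟩; omega
      set j₀ := S.min' hne with hj₀
      have hj₀S : j₀ ∈ S := S.min'_mem hne
      have htj₀ : t < x j₀ := (Finset.mem_filter.mp hj₀S).2
      have hSeq : S = Finset.Ici j₀ := by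
        ext i
        simp only [hS, Finset.mem_filter, Finset.mem_univ, true_and, Finset.mem_Ici]
        constructor
        · intro hi; exact S.min'_le i (Finset.mem_filter.mpr ⟨Finset.mem_univ _, hi⟩)
        · intro hi; exact lt_of_lt_of_le htj₀ (hmono.monotone hi)
      have hcardS : S.card = 2*r - j₀.val := by rw [hSeq, Fin.card_Ici]
      have hj₀odd : Odd j₀.val := by
        have : j₀.val < 2*r := j₀.isLt
        rcases hodd with ⟨m, hm⟩
        rcases Nat.even_or_odd j₀.val with ⟨l, hl⟩ | ho
        · omega
        · exact ho
      obtain ⟨k, hk⟩ := hj₀odd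
      refine ⟨⟨k, by omega⟩, ?_, ?_⟩
      · by_contra hlt
        push_neg at hlt
        have : (⟨2*k, by omega⟩ : Fin (2*r)) ∈ S :=
          Finset.mem_filter.mpr ⟨Finset.mem_univ _, hlt⟩
        have hle : (j₀ : ℕ) ≤ 2*k := S.min'_le _ this
        omega
      · have : x j₀ = x ⟨2*k+1, by omega⟩ := by congr 1; exact Fin.ext (by simp only [Fin.val_mk]; omega)
        linarith
  · intro k t hta htb
    have hroot : ∀ i, t ≠ x i := by
      intro i hti
      rw [hti] at hta htb
      have h1 := hmono.lt_iff_lt.mp hta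
      have h2 := hmono.lt_iff_lt.mp htb
      rw [Fin.lt_def] at h1 h2
      simp at h1 h2
      omega
    obtain ⟨P, hP, hQt⟩ := sign t hroot
    have hSeq : (univ.filter (fun i => t < x i)) = Finset.Ici (⟨2*k+1, by omega⟩ : Fin (2*r)) := by
      ext i
      simp only [Finset.mem_filter, Finset.mem_univ, true_and, Finset.mem_Ici]
      constructor
      · intro hi
        by_contra hn
        push_neg at hn
        simp only [Fin.lt_def, Fin.val_mk] at hn
        have : x i ≤ x ⟨2*k, by omega⟩ := hmono.monotone (by simp only [Fin.le_def, Fin.val_mk]; omega)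
        linarith
      · intro hi
        calc t < x ⟨2*k+1, by omega⟩ := htb
        _ ≤ x i := hmono.monotone hi
    rw [hSeq, Fin.card_Ici] at hQt
    have hodd : Odd (2*r - (2*k+1)) := by
      have := k.isLt; refine ⟨r - k - 1, by omega⟩
    rw [hodd.neg_one_pow] at hQt
    nlinarith

open Polynomial in
private lemma SQaux_G (Q : ℝ[X]) (hsf : Squarefree Q) (a b : ℝ) (hab : a < b)
    (ha : Q.eval a = 0) (hb : Q.eval b = 0)
    (hpos : ∀ t, a < t → t < b → 0 < Q.eval t) :
    ∃ G : ℝ[X], Q = (X - C a) * (C b - X) * G ∧ ∀ t ∈ Set.Icc a b, 0 < G.eval t := by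
  have hdvd : (X - C a) * (X - C b) ∣ Q := by
    apply (Polynomial.isCoprime_X_sub_C_of_isUnit_sub (by
      exact IsUnit.of_mul_eq_one (a-b)⁻¹ (by field_simp [sub_ne_zero.mpr hab.ne]))).mul_dvd
    · exact Polynomial.dvd_iff_isRoot.mpr ha
    · exact Polynomial.dvd_iff_isRoot.mpr hb
  obtain ⟨D, hD⟩ := hdvd
  refine ⟨-D, by rw [hD]; ring, ?_⟩
  set G : ℝ[X] := -D with hG
  have hfact : Q = (X - C a) * (C b - X) * G := by rw [hD, hG]; ring
  have hevalf : ∀ t, Q.eval t = (t - a) * (b - t) * G.eval t := by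
    intro t; rw [hfact]; simp
  have hGopen : ∀ t, a < t → t < b → 0 < G.eval t := by
    intro t h1 h2
    have := hpos t h1 h2
    rw [hevalf t] at this
    nlinarith [mul_pos (sub_pos.mpr h1) (sub_pos.mpr h2)]
  have hGa' : G.eval a ≠ 0 := by
    intro h0
    obtain ⟨H, hH⟩ := Polynomial.dvd_iff_isRoot.mpr h0
    have : (X - C a) * (X - C a) ∣ Q := ⟨(C b - X) * H, by rw [hfact, hH]; ring⟩
    exact Polynomial.not_isUnit_X_sub_C a (hsf _ this)
  have hGb' : G.eval b ≠ 0 := by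
    intro h0
    obtain ⟨H, hH⟩ := Polynomial.dvd_iff_isRoot.mpr h0
    have : (X - C b) * (X - C b) ∣ Q := ⟨-((X - C a) * H), by rw [hfact, hH]; ring⟩
    exact Polynomial.not_isUnit_X_sub_C b (hsf _ this)
  have hGa : 0 < G.eval a := by
    have hnb : (nhdsWithin a (Set.Ioo a b)).NeBot := by
      rw [← mem_closure_iff_nhdsWithin_neBot, closure_Ioo hab.ne]
      exact ⟨le_refl a, hab.le⟩
    have hle : 0 ≤ G.eval a := by
      refine ge_of_tendsto ((G.continuous.continuousWithinAt :
        ContinuousWithinAt (fun t => G.eval t) (Set.Ioo a b) a)) ?_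
      filter_upwards [self_mem_nhdsWithin] with t ht
      exact (hGopen t ht.1 ht.2).le
    exact lt_of_le_of_ne hle (Ne.symm hGa')
  have hGb : 0 < G.eval b := by
    have hnb : (nhdsWithin b (Set.Ioo a b)).NeBot := by
      rw [← mem_closure_iff_nhdsWithin_neBot, closure_Ioo hab.ne]
      exact ⟨hab.le, le_refl b⟩
    have hle : 0 ≤ G.eval b := by
      refine ge_of_tendsto ((G.continuous.continuousWithinAt :
        ContinuousWithinAt (fun t => G.eval t) (Set.Ioo a b) b)) ?_
      filter_upwards [self_mem_nhdsWithin] with t ht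
      exact (hGopen t ht.1 ht.2).le
    exact lt_of_le_of_ne hle (Ne.symm hGb')
  intro t ht
  rcases eq_or_lt_of_le ht.1 with h1 | h1
  · rwa [← h1]
  rcases eq_or_lt_of_le ht.2 with h2 | h2
  · rwa [h2]
  exact hGopen t h1 h2

private lemma SQaux_contFin {X Y : Type*} [TopologicalSpace X] [TopologicalSpace Y] {r : ℕ}
    (f : Fin r → X → Y) (hf : ∀ k, Continuous (f k)) :
    Continuous (fun q : Fin r × X => f q.1 q.2) := by
  rw [continuous_iff_continuousAt]
  rintro ⟨k, x⟩
  have hev : (fun q : Fin r × X => f q.1 q.2) =ᶠ[nhds (k, x)] (fun q => f k q.2) := by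
    have : {q : Fin r × X | q.1 = k} ∈ nhds (k, x) := by
      apply IsOpen.mem_nhds
      · exact (isOpen_discrete {k}).preimage continuous_fst
      · rfl
    filter_upwards [this] with q hq
    rw [hq]
  exact (((hf k).comp continuous_snd).continuousAt).congr hev.symm

private lemma SQaux_sphere_coords (p : Metric.sphere (0 : EuclideanSpace ℝ (Fin 3)) 1) :
    (p : EuclideanSpace ℝ (Fin 3)) 0 ^ 2 + (p : EuclideanSpace ℝ (Fin 3)) 1 ^ 2
      + (p : EuclideanSpace ℝ (Fin 3)) 2 ^ 2 = 1 := by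
  have hp := p.2
  rw [mem_sphere_iff_norm, sub_zero, EuclideanSpace.norm_eq] at hp
  have hnn : (0:ℝ) ≤ ∑ i, ‖(p : EuclideanSpace ℝ (Fin 3)) i‖^2 :=
    Finset.sum_nonneg fun i _ => sq_nonneg _
  have h2 : ∑ i, ‖(p : EuclideanSpace ℝ (Fin 3)) i‖^2 = 1 := by
    nlinarith [Real.sq_sqrt hnn]
  simpa [Fin.sum_univ_three, Real.norm_eq_abs, sq_abs] using h2

private lemma SQaux_sphere_mk (u v w : ℝ) (h : u^2+v^2+w^2 = 1) :
    ∃ p : Metric.sphere (0 : EuclideanSpace ℝ (Fin 3)) 1,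
      (p : EuclideanSpace ℝ (Fin 3)) 0 = u ∧ (p : EuclideanSpace ℝ (Fin 3)) 1 = v ∧
      (p : EuclideanSpace ℝ (Fin 3)) 2 = w := by
  refine ⟨⟨(WithLp.equiv 2 _).symm ![u, v, w], ?_⟩, rfl, rfl, rfl⟩
  rw [mem_sphere_iff_norm, sub_zero, EuclideanSpace.norm_eq]
  simp only [WithLp.equiv_symm_apply, PiLp.toLp_apply, WithLp.ofLp_toLp, Fin.sum_univ_three, Real.norm_eq_abs, sq_abs,
    Matrix.cons_val_zero, Matrix.cons_val_one, Matrix.head_cons, Matrix.cons_val_two,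
    Matrix.tail_cons]
  rw [h, Real.sqrt_one]

set_option maxHeartbeats 1000000 in
open Polynomial in
/-- If `Q` is real-rooted squarefree of degree `2r` (`r ≥ 1`) with negative leading
coefficient, then `S_Q` (with its topology as a subset of `ℝ³`) is homeomorphic to the
disjoint union of `r` copies of the unit `2`-sphere. -/
theorem SQ_homeomorph_spheres (r : ℕ) (hr : 1 ≤ r) (Q : Polynomial ℝ)
    (hQ : RealRootedSquarefree Q) (hdeg : Q.natDegree = 2 * r)
    (hlead : Q.leadingCoeff < 0) :
    Nonempty ((SQ Q) ≃ₜ (Fin r × (Metric.sphere (0 : EuclideanSpace ℝ (Fin 3)) 1))) := by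
  classical
  obtain ⟨hndeg, hsf, him⟩ := hQ
  obtain ⟨x, hmono, heval⟩ := SQaux_enum Q r hsf hdeg him
  obtain ⟨hcover, hopenpos⟩ := SQaux_sign Q r x hmono heval hlead
  set a : Fin r → ℝ := fun k => x ⟨2*k, by omega⟩ with ha
  set b : Fin r → ℝ := fun k => x ⟨2*k+1, by omega⟩ with hb
  have hab : ∀ k, a k < b k := fun k =>
    hmono (by simp only [Fin.lt_def, Fin.val_mk]; omega)
  have hxroot : ∀ i, Q.eval (x i) = 0 := by
    intro i
    rw [heval (x i)]
    have : x i - x i = 0 := sub_self _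
    rw [Finset.prod_eq_zero (Finset.mem_univ i) this, mul_zero]
  have hGex : ∀ k : Fin r, ∃ G : ℝ[X], Q = (X - C (a k)) * (C (b k) - X) * G ∧
      ∀ t ∈ Set.Icc (a k) (b k), 0 < G.eval t := by
    intro k
    exact SQaux_G Q hsf (a k) (b k) (hab k) (hxroot _) (hxroot _) (fun t h1 h2 =>
      hopenpos k t h1 h2)
  choose G hGfact hGpos using hGex
  -- basic functions
  set φ : Fin r → ℝ → ℝ := fun k u => (a k + b k)/2 + u * ((b k - a k)/2) with hφ
  set c : Fin r → ℝ → ℝ := fun k u =>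
    Real.sqrt (((b k - a k)/2)^2 * (G k).eval (φ k u)) with hc
  have hevalG : ∀ k t, Q.eval t = (t - a k) * (b k - t) * (G k).eval t := by
    intro k t
    conv_lhs => rw [hGfact k]
    simp only [Polynomial.eval_mul, Polynomial.eval_sub, Polynomial.eval_X, Polynomial.eval_C]
  have hφmem : ∀ k (u : ℝ), -1 ≤ u → u ≤ 1 → φ k u ∈ Set.Icc (a k) (b k) := by
    intro k u h1 h2
    have := hab k
    constructor
    · simp only [hφ]; nlinarith
    · simp only [hφ]; nlinarith
  have hφab : ∀ k (u : ℝ), (φ k u - a k) * (b k - φ k u)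
      = ((b k - a k)/2)^2 * (1 - u^2) := by
    intro k u
    simp only [hφ]
    ring
  have hcsq : ∀ k (u : ℝ), -1 ≤ u → u ≤ 1 →
      (c k u)^2 = ((b k - a k)/2)^2 * (G k).eval (φ k u) := by
    intro k u h1 h2
    apply Real.sq_sqrt
    have := hGpos k (φ k u) (hφmem k u h1 h2)
    positivity
  have hcpos : ∀ k (u : ℝ), -1 ≤ u → u ≤ 1 → 0 < c k u := by
    intro k u h1 h2
    apply Real.sqrt_pos.mpr
    have h3 := hGpos k (φ k u) (hφmem k u h1 h2)
    have h4 : 0 < (b k - a k)/2 := by have := hab k; linarith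
    exact mul_pos (pow_pos h4 2) h3
  -- coordinates of sphere points
  have hu_bounds : ∀ p : Metric.sphere (0 : EuclideanSpace ℝ (Fin 3)) 1,
      -1 ≤ (p : EuclideanSpace ℝ (Fin 3)) 0 ∧ (p : EuclideanSpace ℝ (Fin 3)) 0 ≤ 1 := by
    intro p
    have := SQaux_sphere_coords p
    constructor <;> nlinarith [sq_nonneg ((p : EuclideanSpace ℝ (Fin 3)) 1),
      sq_nonneg ((p : EuclideanSpace ℝ (Fin 3)) 2)]
  -- the forward map
  have hmemSQ : ∀ (k : Fin r) (p : Metric.sphere (0 : EuclideanSpace ℝ (Fin 3)) 1),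
      (φ k ((p : EuclideanSpace ℝ (Fin 3)) 0),
        c k ((p : EuclideanSpace ℝ (Fin 3)) 0) * (p : EuclideanSpace ℝ (Fin 3)) 1,
        c k ((p : EuclideanSpace ℝ (Fin 3)) 0) * (p : EuclideanSpace ℝ (Fin 3)) 2) ∈ SQ Q := by
    intro k p
    obtain ⟨h1, h2⟩ := hu_bounds p
    set u := (p : EuclideanSpace ℝ (Fin 3)) 0
    set v := (p : EuclideanSpace ℝ (Fin 3)) 1
    set w := (p : EuclideanSpace ℝ (Fin 3)) 2
    have huvw : u^2 + v^2 + w^2 = 1 := SQaux_sphere_coords p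
    show (c k u * v)^2 + (c k u * w)^2 = Q.eval (φ k u)
    rw [hevalG k (φ k u), hφab k u]
    have hcs := hcsq k u h1 h2
    nlinarith [hcs]
  set F : Fin r × (Metric.sphere (0 : EuclideanSpace ℝ (Fin 3)) 1) → SQ Q := fun q =>
    ⟨(φ q.1 ((q.2 : EuclideanSpace ℝ (Fin 3)) 0),
      c q.1 ((q.2 : EuclideanSpace ℝ (Fin 3)) 0) * (q.2 : EuclideanSpace ℝ (Fin 3)) 1,
      c q.1 ((q.2 : EuclideanSpace ℝ (Fin 3)) 0) * (q.2 : EuclideanSpace ℝ (Fin 3)) 2),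
      hmemSQ q.1 q.2⟩ with hF
  -- continuity
  set coord : Fin 3 → Metric.sphere (0 : EuclideanSpace ℝ (Fin 3)) 1 → ℝ :=
    fun i p => (p : EuclideanSpace ℝ (Fin 3)) i with hcoorddef
  have hcoord : ∀ i : Fin 3, Continuous (coord i) := by
    intro i
    exact (continuous_apply i).comp ((PiLp.continuous_ofLp (p := 2) (β := fun _ : Fin 3 => ℝ)).comp continuous_subtype_val)
  have hφc : ∀ k, Continuous (φ k) := by
    intro k
    exact continuous_const.add (continuous_id.mul continuous_const)
  have hcc : ∀ k, Continuous (c k) := by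
    intro k
    exact Real.continuous_sqrt.comp (continuous_const.mul ((G k).continuous.comp (hφc k)))
  have hFc : Continuous F := by
    apply Continuous.subtype_mk
    refine Continuous.prodMk ?_ (Continuous.prodMk ?_ ?_)
    · exact SQaux_contFin (fun k p => φ k (coord 0 p))
        (fun k => (hφc k).comp (hcoord 0))
    · exact SQaux_contFin (fun k p => c k (coord 0 p) * coord 1 p)
        (fun k => ((hcc k).comp (hcoord 0)).mul (hcoord 1))
    · exact SQaux_contFin (fun k p => c k (coord 0 p) * coord 2 p)
        (fun k => ((hcc k).comp (hcoord 0)).mul (hcoord 2))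
  -- injectivity
  have hsep : ∀ k l : Fin r, k < l → b k < a l := by
    intro k l hkl
    apply hmono
    simp only [Fin.lt_def, Fin.val_mk]
    omega
  have hinj : Function.Injective F := by
    rintro ⟨k, p⟩ ⟨l, q⟩ hkl
    have hval := congrArg Subtype.val hkl
    have h1 := congrArg Prod.fst hval
    have h2 := congrArg (fun z : ℝ×ℝ×ℝ => z.2.1) hval
    have h3 := congrArg (fun z : ℝ×ℝ×ℝ => z.2.2) hval
    simp only [hF] at h1 h2 h3
    obtain ⟨hp1, hp2⟩ := hu_bounds p
    obtain ⟨hq1, hq2⟩ := hu_bounds q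
    have hmemp := hφmem k _ hp1 hp2
    have hmemq := hφmem l _ hq1 hq2
    have hkeq : k = l := by
      rcases lt_trichotomy k l with h | h | h
      · exfalso
        have := hsep k l h
        have := hmemp.2
        have := hmemq.1
        rw [h1] at *
        linarith
      · exact h
      · exfalso
        have := hsep l k h
        have := hmemp.1
        have := hmemq.2
        rw [h1] at *
        linarith
    subst hkeq
    have hueq : (p : EuclideanSpace ℝ (Fin 3)) 0 = (q : EuclideanSpace ℝ (Fin 3)) 0 := by
      have hd := hab k
      simp only [hφ] at h1
      nlinarith [h1]
    have hcval := hcpos k _ hp1 hp2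
    rw [hueq] at h2 h3 hcval
    have hveq : (p : EuclideanSpace ℝ (Fin 3)) 1 = (q : EuclideanSpace ℝ (Fin 3)) 1 := by
      have := mul_left_cancel₀ hcval.ne' h2
      exact this
    have hweq : (p : EuclideanSpace ℝ (Fin 3)) 2 = (q : EuclideanSpace ℝ (Fin 3)) 2 := by
      exact mul_left_cancel₀ hcval.ne' h3
    have hpq : p = q := by
      apply Subtype.ext
      ext i
      fin_cases i
      · exact hueq
      · exact hveq
      · exact hweq
    rw [hpq]
  -- surjectivity
  have hsurj : Function.Surjective F := by
    rintro ⟨⟨xx, y, z⟩, hv⟩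
    have hv' : y^2 + z^2 = Q.eval xx := hv
    have hQx : 0 ≤ Q.eval xx := by rw [← hv']; positivity
    obtain ⟨k, hax, hxb⟩ := hcover xx hQx
    have hax' : a k ≤ xx := hax
    have hxb' : xx ≤ b k := hxb
    have hd : 0 < b k - a k := by have := hab k; linarith
    set u : ℝ := (2*xx - a k - b k)/(b k - a k) with hu
    have hu1 : -1 ≤ u := by
      rw [hu, le_div_iff₀ hd]
      linarith
    have hu2 : u ≤ 1 := by
      rw [hu, div_le_iff₀ hd]
      linarith
    have hφu : φ k u = xx := by
      simp only [hφ, hu]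
      field_simp
      ring
    have hGx : 0 < (G k).eval xx := hGpos k xx ⟨hax', hxb'⟩
    have hcp : 0 < c k u := hcpos k u hu1 hu2
    have hc2 : (c k u)^2 = ((b k - a k)/2)^2 * (G k).eval xx := by
      rw [hcsq k u hu1 hu2, hφu]
    set v : ℝ := y / c k u with hvdef
    set w : ℝ := z / c k u with hwdef
    have hid : ((b k - a k)/2)^2 * (1 - u^2) = (xx - a k) * (b k - xx) := by
      rw [← hφu, hφab k u]
    have hvw : v^2 + w^2 = 1 - u^2 := by
      have hcs : (c k u) ≠ 0 := hcp.ne'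
      have h1 : v^2 + w^2 = (y^2 + z^2) / (c k u)^2 := by
        rw [hvdef, hwdef, div_pow, div_pow, ← add_div]
      rw [h1, hv', hevalG k xx, hc2]
      rw [← hid]
      have hbk : ((b k - a k)/2)^2 ≠ 0 := by positivity
      field_simp
    have husum : u^2 + v^2 + w^2 = 1 := by linarith
    obtain ⟨p, hp0, hp1, hp2⟩ := SQaux_sphere_mk u v w husum
    refine ⟨(k, p), ?_⟩
    apply Subtype.ext
    show (φ k ((p : EuclideanSpace ℝ (Fin 3)) 0),
      c k ((p : EuclideanSpace ℝ (Fin 3)) 0) * (p : EuclideanSpace ℝ (Fin 3)) 1,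
      c k ((p : EuclideanSpace ℝ (Fin 3)) 0) * (p : EuclideanSpace ℝ (Fin 3)) 2) = (xx, y, z)
    rw [hp0, hp1, hp2]
    refine Prod.ext hφu (Prod.ext ?_ ?_)
    · show c k u * v = y
      rw [hvdef]
      field_simp
    · show c k u * w = z
      rw [hwdef]
      field_simp
  -- conclude
  have hbij : Function.Bijective F := ⟨hinj, hsurj⟩
  exact ⟨(Continuous.homeoOfEquivCompactToT2
    (f := Equiv.ofBijective F hbij) hFc).symm⟩
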